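/- arXiv:1006.1125 — 2 statements merged into one kernel-verified Lean document; each statement's English description precedes it below -/
import Mathlib

section
/- Assume max_{cl(Ω)} |∇V| > 0. Then every twice continuously differentiable curve γ : ℝ → cl(Ω) solving γ''(t) + ∇V(γ(t)) = 0 for all t ∈ ℝ satisfies ½|γ'(0)|² + V(γ(0)) ≤ max_{cl(Ω)} V + ½ · diam(cl(Ω)) · max_{cl(Ω)} |∇V|. In particular, every periodic solution of the unperturbed Euler–Lagrange equation with values in cl(Ω) has energy at most max_{cl(Ω)} V + ½ · diam(cl(Ω)) · max_{cl(Ω)} |∇V|. -/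
open Set Metric MeasureTheory Filter Real
open scoped Topology RealInnerProductSpace ENNReal NNReal

noncomputable section

/-- `Ω ⊆ ℝᴺ` has smooth boundary, in the sense that the distance function to the
boundary is smooth at every interior point sufficiently close to the boundary. -/
def SmoothBoundary {N : ℕ} (Ω : Set (EuclideanSpace ℝ (Fin N))) : Prop :=
  ∃ d₀ : ℝ, 0 < d₀ ∧ ∀ q ∈ Ω, Metric.infDist q (frontier Ω) ≤ d₀ →
    ContDiffAt ℝ (⊤ : ℕ∞) (fun x => Metric.infDist x (frontier Ω)) q

/-- `ν` is the outer unit normal field along the boundary of `Ω`. -/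
def IsOuterUnitNormal {N : ℕ} (Ω : Set (EuclideanSpace ℝ (Fin N)))
    (ν : EuclideanSpace ℝ (Fin N) → EuclideanSpace ℝ (Fin N)) : Prop :=
  ∀ q ∈ frontier Ω, ‖ν q‖ = 1 ∧
    ∃ ε : ℝ, 0 < ε ∧ ∀ s : ℝ, 0 < s → s < ε →
      q - s • ν q ∈ Ω ∧ q + s • ν q ∉ closure Ω

/-- `V` is smooth on an open neighborhood of the closure of `Ω`. -/
def SmoothOnNbhdOfClosure {N : ℕ} (Ω : Set (EuclideanSpace ℝ (Fin N)))
    (V : EuclideanSpace ℝ (Fin N) → ℝ) : Prop :=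
  ∃ W : Set (EuclideanSpace ℝ (Fin N)), IsOpen W ∧ closure Ω ⊆ W ∧
    ContDiffOn ℝ (⊤ : ℕ∞) V W

/-- If `max_{cl(Ω)} |∇V| > 0`, then every `C²` curve `γ : ℝ → cl(Ω)` solving
`γ'' + ∇V(γ) = 0` on all of `ℝ` has energy
`½|γ'(0)|² + V(γ(0)) ≤ max_{cl(Ω)} V + ½ · diam(cl(Ω)) · max_{cl(Ω)} |∇V|`. -/
theorem energy_bound_of_global_interior_solution
    {N : ℕ} (hN : 1 ≤ N)
    (Ω : Set (EuclideanSpace ℝ (Fin N)))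
    (ν : EuclideanSpace ℝ (Fin N) → EuclideanSpace ℝ (Fin N))
    (V : EuclideanSpace ℝ (Fin N) → ℝ)
    (hΩne : Ω.Nonempty) (hΩo : IsOpen Ω) (hΩb : Bornology.IsBounded Ω)
    (hΩs : SmoothBoundary Ω) (hν : IsOuterUnitNormal Ω ν)
    (hV : SmoothOnNbhdOfClosure Ω V)
    (hgrad : 0 < sSup ((fun q => ‖gradient V q‖) '' closure Ω))
    (γ : ℝ → EuclideanSpace ℝ (Fin N))
    (hγ : ContDiff ℝ 2 γ)
    (hγΩ : ∀ t : ℝ, γ t ∈ closure Ω)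
    (hEL : ∀ t : ℝ, deriv (deriv γ) t = -(gradient V (γ t))) :
    (1/2) * ‖deriv γ 0‖ ^ 2 + V (γ 0) ≤
      sSup (V '' closure Ω) +
        (1/2) * Metric.diam (closure Ω) *
          sSup ((fun q => ‖gradient V q‖) '' closure Ω) := by
  classical
  obtain ⟨W, hWo, hKW, hVW⟩ := hV
  have hKb : Bornology.IsBounded (closure Ω) := hΩb.closure
  have hKc : IsCompact (closure Ω) := hΩb.isCompact_closure
  -- differentiability of γ and of its derivative
  have h2 : ContDiff ℝ (1 + 1) γ := by norm_num; exact hγ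
  obtain ⟨hdγ, -, hcd⟩ := contDiff_succ_iff_deriv.mp h2
  have hddγ : Differentiable ℝ (deriv γ) := hcd.differentiable one_ne_zero
  have hd : ∀ t, HasDerivAt γ (deriv γ t) t := fun t => (hdγ t).hasDerivAt
  have hd2 : ∀ t, HasDerivAt (deriv γ) (deriv (deriv γ) t) t := fun t => (hddγ t).hasDerivAt
  -- V is differentiable at points of the curve
  have hVdiff : ∀ t, DifferentiableAt ℝ V (γ t) := fun t =>
    (hVW.contDiffAt (hWo.mem_nhds (hKW (hγΩ t)))).differentiableAt (by norm_num)
  -- gradient is continuous on W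
  have hgc : ContinuousOn (fun q => gradient V q) W := by
    have h1 : ContinuousOn (fun q => fderiv ℝ V q) W :=
      hVW.continuousOn_fderiv_of_isOpen hWo (by norm_num)
    have heq : (fun q => gradient V q) =
        fun q => (InnerProductSpace.toDual ℝ _).symm (fderiv ℝ V q) := rfl
    rw [heq]
    exact (InnerProductSpace.toDual ℝ _).symm.continuous.comp_continuousOn h1
  have hVc : ContinuousOn V W := hVW.continuousOn
  set M := sSup ((fun q => ‖gradient V q‖) '' closure Ω) with hMdef
  set L := sSup (V '' closure Ω) with hLdef
  set m := sInf (V '' closure Ω) with hmdef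
  set D := Metric.diam (closure Ω) with hDdef
  clear_value M L m D
  -- pointwise bounds along the curve
  have hMb : ∀ t : ℝ, ‖gradient V (γ t)‖ ≤ M := by
    intro t
    rw [hMdef]
    exact le_csSup (hKc.image_of_continuousOn ((hgc.mono hKW).norm)).bddAbove
      ⟨γ t, hγΩ t, rfl⟩
  have hLb : ∀ t : ℝ, V (γ t) ≤ L := by
    intro t
    rw [hLdef]
    exact le_csSup (hKc.image_of_continuousOn (hVc.mono hKW)).bddAbove ⟨γ t, hγΩ t, rfl⟩
  have hmb : ∀ t : ℝ, m ≤ V (γ t) := by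
    intro t
    rw [hmdef]
    exact csInf_le (hKc.image_of_continuousOn (hVc.mono hKW)).bddBelow ⟨γ t, hγΩ t, rfl⟩
  have hDb : ∀ s t : ℝ, ‖γ s - γ t‖ ≤ D := by
    intro s t
    rw [← dist_eq_norm, hDdef]
    exact Metric.dist_le_diam_of_mem hKb (hγΩ s) (hγΩ t)
  have hD0 : (0:ℝ) ≤ D := hDdef ▸ Metric.diam_nonneg
  -- energy conservation
  set E0 := (1/2) * ‖deriv γ 0‖ ^ 2 + V (γ 0) with hE0def
  clear_value E0
  have heD : ∀ t : ℝ, HasDerivAt (fun s => (1/2) * ‖deriv γ s‖ ^ 2 + V (γ s)) 0 t := by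
    intro t
    have h1 : HasDerivAt (fun s => ⟪deriv γ s, deriv γ s⟫)
        (⟪deriv γ t, deriv (deriv γ) t⟫ + ⟪deriv (deriv γ) t, deriv γ t⟫) t :=
      (hd2 t).inner ℝ (hd2 t)
    have h3 : HasDerivAt (fun s => (1/2) * ‖deriv γ s‖ ^ 2)
        ((1/2) * (⟪deriv γ t, deriv (deriv γ) t⟫ + ⟪deriv (deriv γ) t, deriv γ t⟫)) t := by
      have heq : (fun s => (1/2 : ℝ) * ‖deriv γ s‖ ^ 2)
          = fun s => (1/2) * ⟪deriv γ s, deriv γ s⟫ := by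
        funext s; rw [real_inner_self_eq_norm_sq]
      rw [heq]
      exact h1.const_mul _
    have h4 : HasDerivAt (fun s => V (γ s)) ⟪gradient V (γ t), deriv γ t⟫ t := by
      have := (hVdiff t).hasFDerivAt.comp_hasDerivAt t (hd t)
      have hfe : fderiv ℝ V (γ t) (deriv γ t) = ⟪gradient V (γ t), deriv γ t⟫ := by
        simp [gradient, InnerProductSpace.toDual_symm_apply]
      rw [hfe] at this
      exact this
    have h5 := h3.add h4
    refine h5.congr_deriv ?_
    rw [hEL t, inner_neg_right, inner_neg_left, real_inner_comm (deriv γ t)]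
    ring
  have hecst : ∀ t : ℝ, (1/2) * ‖deriv γ t‖ ^ 2 + V (γ t) = E0 := by
    intro t
    rw [hE0def]
    exact is_const_of_deriv_eq_zero (fun s => (heD s).differentiableAt)
      (fun s => (heD s).deriv) t 0
  have hnorm : ∀ t : ℝ, ‖deriv γ t‖ ^ 2 = 2 * (E0 - V (γ t)) := by
    intro t; have := hecst t; linarith
  -- argue by contradiction
  by_contra hcon
  push_neg at hcon
  set δ := 2 * (E0 - L) - D * M with hδdef
  clear_value δ
  have hδ0 : 0 < δ := by
    have hM0 : 0 < M := hgrad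
    have := hcon
    simp only [hδdef]
    nlinarith
  set φ : ℝ → ℝ := fun t => ⟪γ t - γ 0, deriv γ t⟫ with hφdef
  have hφD : ∀ t : ℝ, HasDerivAt φ
      (⟪γ t - γ 0, deriv (deriv γ) t⟫ + ⟪deriv γ t, deriv γ t⟫) t :=
    fun t => ((hd t).sub_const (γ 0)).inner ℝ (hd2 t)
  have hφ' : ∀ t : ℝ, δ ≤ ⟪γ t - γ 0, deriv (deriv γ) t⟫ + ⟪deriv γ t, deriv γ t⟫ := by
    intro t
    have h1 : ⟪deriv γ t, deriv γ t⟫ = 2 * (E0 - V (γ t)) := by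
      rw [real_inner_self_eq_norm_sq]; exact hnorm t
    have hcs : |⟪γ t - γ 0, deriv (deriv γ) t⟫| ≤ ‖γ t - γ 0‖ * ‖deriv (deriv γ) t‖ :=
      abs_real_inner_le_norm _ _
    have hb : ‖γ t - γ 0‖ * ‖deriv (deriv γ) t‖ ≤ D * M := by
      rw [hEL t, norm_neg]
      exact mul_le_mul (hDb t 0) (hMb t) (norm_nonneg _) hD0
    have h2 : -(D * M) ≤ ⟪γ t - γ 0, deriv (deriv γ) t⟫ := by
      have := neg_abs_le ⟪γ t - γ 0, deriv (deriv γ) t⟫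
      linarith
    have h3 : V (γ t) ≤ L := hLb t
    simp only [hδdef]
    linarith
  set C := D * Real.sqrt (2 * (E0 - m)) with hCdef
  clear_value C
  have hC0 : (0:ℝ) ≤ C := by
    rw [hCdef]; exact mul_nonneg hD0 (Real.sqrt_nonneg _)
  set T := (C + 1) / δ with hTdef
  clear_value T
  have hT0 : (0:ℝ) ≤ T := by
    rw [hTdef]; exact div_nonneg (by linarith) hδ0.le
  have hmono : Monotone (fun t => φ t - δ * t) := by
    have hder : ∀ t : ℝ, HasDerivAt (fun t => φ t - δ * t)
        (⟪γ t - γ 0, deriv (deriv γ) t⟫ + ⟪deriv γ t, deriv γ t⟫ - δ) t := by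
      intro t
      have hlin : HasDerivAt (fun t : ℝ => δ * t) δ t := by
        simpa using (hasDerivAt_id t).const_mul δ
      exact (hφD t).sub hlin
    apply monotone_of_deriv_nonneg
    · exact fun t => ((hder t).differentiableAt)
    · intro t
      rw [(hder t).deriv]
      linarith [hφ' t]
  have hφT : δ * T ≤ φ T := by
    have h := hmono hT0
    have hφ0 : φ 0 = 0 := by simp [hφdef]
    simp only at h
    rw [hφ0] at h
    linarith
  have hφub : φ T ≤ C := by
    have h1 : φ T ≤ ‖γ T - γ 0‖ * ‖deriv γ T‖ := real_inner_le_norm _ _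
    have h2 : ‖deriv γ T‖ ≤ Real.sqrt (2 * (E0 - m)) := by
      have hsq : ‖deriv γ T‖ ^ 2 ≤ 2 * (E0 - m) := by
        rw [hnorm T]; linarith [hmb T]
      calc ‖deriv γ T‖ = Real.sqrt (‖deriv γ T‖ ^ 2) :=
            (Real.sqrt_sq (norm_nonneg _)).symm
        _ ≤ Real.sqrt (2 * (E0 - m)) := Real.sqrt_le_sqrt hsq
    calc φ T ≤ ‖γ T - γ 0‖ * ‖deriv γ T‖ := h1
      _ ≤ D * Real.sqrt (2 * (E0 - m)) :=
          mul_le_mul (hDb T 0) h2 (norm_nonneg _) hD0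
      _ = C := hCdef.symm
  have hδT : δ * T = C + 1 := by
    rw [hTdef, mul_div_cancel₀ _ (ne_of_gt hδ0)]
  linarith
end
end

section
/- For every E > max_{cl(Ω)} V there exists ε₀ > 0 such that for all ε ∈ (0, ε₀]: every q ∈ Ω with V(q) + εU(q) = E satisfies ∇V(q) + ε∇U(q) ≠ 0. Consequently, E is a regular value of the Hamiltonian H_ε(q,p) = ½|p|² + V(q) + εU(q) on Ω × ℝ^N, i.e. the gradient of H_ε does not vanish at any point of the level set {H_ε = E}. -/
open Set Metric MeasureTheory Filter Real
open scoped Topology RealInnerProductSpace ENNReal NNReal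

noncomputable section

/-- The data entering the construction of the potential `U`: a constant `d₀ ∈ (0, ½)`
such that the distance to the boundary is smooth at interior points at distance `≤ 2d₀`
from the boundary, and a smooth cutoff function `k : [0,∞) → [0,2d₀]` with `0 ≤ k' ≤ 1`,
`k(x) = x` for `x ≤ d₀` and `k` constant for `x ≥ 2d₀`. -/
structure BoundaryCutoff {N : ℕ} (Ω : Set (EuclideanSpace ℝ (Fin N)))
    (d₀ : ℝ) (k : ℝ → ℝ) : Prop where
  d0_pos : 0 < d₀
  d0_lt_half : d₀ < 1 / 2
  dist_smooth : ∀ q ∈ Ω, Metric.infDist q (frontier Ω) ≤ 2 * d₀ →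
    ContDiffAt ℝ (⊤ : ℕ∞) (fun x => Metric.infDist x (frontier Ω)) q
  k_smooth : ContDiff ℝ (⊤ : ℕ∞) k
  k_mem : ∀ x : ℝ, 0 ≤ x → k x ∈ Set.Icc 0 (2 * d₀)
  k_deriv_mem : ∀ x : ℝ, 0 ≤ x → deriv k x ∈ Set.Icc (0 : ℝ) 1
  k_eq_id : ∀ x : ℝ, 0 ≤ x → x ≤ d₀ → k x = x
  k_const : ∀ x : ℝ, 2 * d₀ ≤ x → k x = k (2 * d₀)

/-- The function `h(q) = k(dist(q, ∂Ω))`. -/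
def hfun {N : ℕ} (Ω : Set (EuclideanSpace ℝ (Fin N))) (k : ℝ → ℝ) :
    EuclideanSpace ℝ (Fin N) → ℝ :=
  fun q => k (Metric.infDist q (frontier Ω))

/-- The potential `U(q) = 1 / h(q)²`. -/
def Ufun {N : ℕ} (Ω : Set (EuclideanSpace ℝ (Fin N))) (k : ℝ → ℝ) :
    EuclideanSpace ℝ (Fin N) → ℝ :=
  fun q => 1 / (hfun Ω k q) ^ 2

/-- A smooth `τ`-periodic solution `γ : ℝ/τℤ → Ω` of the perturbed Euler-Lagrange
equation `γ'' + ∇V(γ) + ε ∇U(γ) = 0`. -/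
def IsPerturbedSolution {N : ℕ} (Ω : Set (EuclideanSpace ℝ (Fin N)))
    (V U : EuclideanSpace ℝ (Fin N) → ℝ) (ε τ : ℝ)
    (γ : ℝ → EuclideanSpace ℝ (Fin N)) : Prop :=
  0 < τ ∧ Function.Periodic γ τ ∧ ContDiff ℝ (⊤ : ℕ∞) γ ∧ (∀ t, γ t ∈ Ω) ∧
    ∀ t : ℝ, deriv (deriv γ) t = -(gradient V (γ t) + ε • gradient U (γ t))

lemma inner_grad_Ufun {N : ℕ} (Ω : Set (EuclideanSpace ℝ (Fin N))) (d₀ : ℝ) (k : ℝ → ℝ)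
    (hbc : BoundaryCutoff Ω d₀ k) (q : EuclideanSpace ℝ (Fin N)) (hq : q ∈ Ω)
    (hFne : (frontier Ω).Nonempty)
    (hg0 : 0 < Metric.infDist q (frontier Ω)) (hgd : Metric.infDist q (frontier Ω) < d₀) :
    ∃ u : EuclideanSpace ℝ (Fin N), ‖u‖ = 1 ∧
      ⟪gradient (Ufun Ω k) q, u⟫ = 2 / (Metric.infDist q (frontier Ω)) ^ 3 := by
  set F := frontier Ω with hF
  set r := Metric.infDist q F with hr
  obtain ⟨y, hyF, hry⟩ := isClosed_frontier.exists_infDist_eq_dist hFne q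
  have hyq : ‖y - q‖ = r := by
    rw [hr, hry, dist_eq_norm, norm_sub_rev]
  set u : EuclideanSpace ℝ (Fin N) := r⁻¹ • (y - q) with hu
  have hu1 : ‖u‖ = 1 := by
    rw [hu, norm_smul, hyq, norm_inv, Real.norm_eq_abs, abs_of_pos hg0,
      inv_mul_cancel₀ hg0.ne']
  -- geometric fact
  have key : ∀ s : ℝ, 0 ≤ s → s ≤ r → Metric.infDist (q + s • u) F = r - s := by
    intro s hs0 hsr
    have hyqr : y - q = r • u := by
      rw [hu, smul_smul, mul_inv_cancel₀ hg0.ne', one_smul]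
    apply le_antisymm
    · have hle : Metric.infDist (q + s • u) F ≤ dist (q + s • u) y :=
        Metric.infDist_le_dist_of_mem hyF
    
      have heq : q + s • u - y = (s - r) • u := by
        have : y = q + r • u := by rw [← hyqr]; abel
        rw [this]; module
      have : dist (q + s • u) y = r - s := by
        rw [dist_eq_norm, heq, norm_smul, hu1, mul_one, Real.norm_eq_abs,
          abs_of_nonpos (by linarith)]
        ring
      linarith [hle, this ▸ hle]
    · have h1 : Metric.infDist q F ≤ Metric.infDist (q + s • u) F + dist q (q + s • u) :=
        Metric.infDist_le_infDist_add_dist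
      have h2 : dist q (q + s • u) = s := by
        rw [dist_eq_norm]
        have : q - (q + s • u) = (-s) • u := by module
        rw [this, norm_smul, hu1, mul_one, Real.norm_eq_abs, abs_of_nonpos (by linarith)]
        ring
      rw [h2] at h1
      linarith
  -- differentiability of Ufun at q
  have hcd : ContDiffAt ℝ (⊤ : ℕ∞) (fun x => Metric.infDist x F) q :=
    hbc.dist_smooth q hq (by have := hbc.d0_pos; linarith)
  have hgdiff : DifferentiableAt ℝ (fun x => Metric.infDist x F) q :=
    hcd.differentiableAt (by simp)
  have hgcont : ContinuousAt (fun x => Metric.infDist x F) q :=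
    (Metric.continuous_infDist_pt F).continuousAt
  have hev : Ufun Ω k =ᶠ[𝓝 q] fun x => 1 / (Metric.infDist x F) ^ 2 := by
    have h1 : ∀ᶠ x in 𝓝 q, Metric.infDist x F ∈ Set.Ioo 0 d₀ :=
      hgcont.preimage_mem_nhds (Ioo_mem_nhds hg0 hgd)
    filter_upwards [h1] with x hx
    simp only [Ufun, hfun, ← hF, hbc.k_eq_id _ hx.1.le hx.2.le]
  have hUdiff' : DifferentiableAt ℝ (fun x => 1 / (Metric.infDist x F) ^ 2) q := by
    simp only [one_div]
    exact (hgdiff.pow 2).inv (pow_ne_zero 2 hg0.ne')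
  have hUdiff : DifferentiableAt ℝ (Ufun Ω k) q := hev.differentiableAt_iff.mpr hUdiff'
  have hfd : HasFDerivAt (Ufun Ω k)
      (InnerProductSpace.toDual ℝ _ (gradient (Ufun Ω k) q)) q :=
    hUdiff.hasGradientAt.hasFDerivAt
  have hc : HasDerivAt (fun s : ℝ => q + s • u) u 0 := by
    simpa using ((hasDerivAt_id (0:ℝ)).smul_const u).const_add q
  have hc0 : q + (0:ℝ) • u = q := by simp
  have hfd' : HasFDerivAt (Ufun Ω k)
      (InnerProductSpace.toDual ℝ _ (gradient (Ufun Ω k) q)) (q + (0:ℝ) • u) := by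
    rw [hc0]; exact hfd
  have hφ : HasDerivAt (fun s : ℝ => Ufun Ω k (q + s • u))
      (InnerProductSpace.toDual ℝ _ (gradient (Ufun Ω k) q) u) 0 := by
    exact hfd'.comp_hasDerivAt 0 hc
  -- explicit model function
  have hψ : HasDerivAt (fun s : ℝ => 1 / (r - s) ^ 2) (2 / r ^ 3) 0 := by
    have h1 : HasDerivAt (fun s : ℝ => r - s) (-1) 0 := (hasDerivAt_id 0).const_sub r
    have h2 := h1.pow 2
    have h3 := h2.inv (by simpa using pow_ne_zero 2 hg0.ne')
    simp only [one_div]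
    convert h3 using 1
    any_goals rfl
    field_simp
    simp only [Pi.pow_apply, sub_zero]
    ring
  -- slopes agree on 𝓝[>] 0
  have hφ0 : Ufun Ω k q = 1 / r ^ 2 := by
    simp only [Ufun, hfun, ← hF, ← hr, hbc.k_eq_id r hg0.le hgd.le]
  have heq : ∀ᶠ s in 𝓝[>] (0:ℝ), Ufun Ω k (q + s • u) = 1 / (r - s) ^ 2 := by
    filter_upwards [Ioo_mem_nhdsGT hg0] with s hs
    have hk := key s hs.1.le hs.2.le
    have h1 : (0:ℝ) ≤ r - s := by linarith [hs.2]
    have h2 : r - s ≤ d₀ := by linarith [hs.1, hgd]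
    simp only [Ufun, hfun, ← hF, hk]
    rw [hbc.k_eq_id (r - s) h1 h2]
  have hmono : 𝓝[>] (0:ℝ) ≤ 𝓝[≠] (0:ℝ) :=
    nhdsWithin_mono 0 (fun x hx => ne_of_gt hx)
  have hLφ : Tendsto (slope (fun s : ℝ => Ufun Ω k (q + s • u)) 0) (𝓝[>] 0)
      (𝓝 (InnerProductSpace.toDual ℝ _ (gradient (Ufun Ω k) q) u)) :=
    (hasDerivAt_iff_tendsto_slope.mp hφ).mono_left hmono
  have hLψ : Tendsto (slope (fun s : ℝ => 1 / (r - s) ^ 2) 0) (𝓝[>] 0) (𝓝 (2 / r ^ 3)) :=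
    (hasDerivAt_iff_tendsto_slope.mp hψ).mono_left hmono
  have hslope : slope (fun s : ℝ => Ufun Ω k (q + s • u)) 0
      =ᶠ[𝓝[>] (0:ℝ)] slope (fun s : ℝ => 1 / (r - s) ^ 2) 0 := by
    filter_upwards [heq] with s hs
    rw [slope_def_field, slope_def_field, hs]
    rw [show q + (0:ℝ) • u = q by simp, hφ0]
    norm_num
  have hLψ' : Tendsto (slope (fun s : ℝ => 1 / (r - s) ^ 2) 0) (𝓝[>] 0)
      (𝓝 (InnerProductSpace.toDual ℝ _ (gradient (Ufun Ω k) q) u)) :=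
    hLφ.congr' hslope
  have hfin : InnerProductSpace.toDual ℝ _ (gradient (Ufun Ω k) q) u = 2 / r ^ 3 :=
    tendsto_nhds_unique hLψ' hLψ
  exact ⟨u, hu1, by rw [← InnerProductSpace.toDual_apply_apply, hfin]⟩

/-- **Lemma 3.1.** Every `E > max_{cl(Ω)} V` is a regular value of the Hamiltonian
`H_ε(q,p) = ½|p|² + V(q) + εU(q)` for all sufficiently small `ε > 0`: the gradient
`∇(V + εU)` does not vanish on `{V + εU = E}`, and consequently the (partial)
gradient of `H_ε` does not vanish at any point of `{H_ε = E}`. -/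

theorem energy_level_is_regular_value
    {N : ℕ} (hN : 1 ≤ N)
    (Ω : Set (EuclideanSpace ℝ (Fin N)))
    (V : EuclideanSpace ℝ (Fin N) → ℝ)
    (hΩne : Ω.Nonempty) (hΩo : IsOpen Ω) (hΩb : Bornology.IsBounded Ω)
    (hV : SmoothOnNbhdOfClosure Ω V)
    (d₀ : ℝ) (k : ℝ → ℝ) (hbc : BoundaryCutoff Ω d₀ k)
    (E : ℝ) (hE : sSup (V '' closure Ω) < E) :
    ∃ ε₀ : ℝ, 0 < ε₀ ∧ ∀ ε : ℝ, 0 < ε → ε ≤ ε₀ →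
      (∀ q ∈ Ω, V q + ε * Ufun Ω k q = E →
        gradient V q + ε • gradient (Ufun Ω k) q ≠ 0) ∧
      (∀ q ∈ Ω, ∀ p : EuclideanSpace ℝ (Fin N),
        (1/2) * ‖p‖ ^ 2 + V q + ε * Ufun Ω k q = E →
        ¬ (p = 0 ∧ gradient V q + ε • gradient (Ufun Ω k) q = 0)) := by
  obtain ⟨W, hWo, hKW, hVW⟩ := hV
  have hK : IsCompact (closure Ω) := hΩb.isCompact_closure
  have hVc : ContinuousOn V (closure Ω) := hVW.continuousOn.mono hKW
  have hbdd : BddAbove (V '' closure Ω) := (hK.image_of_continuousOn hVc).bddAbove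
  set S := sSup (V '' closure Ω) with hS
  have hVle : ∀ x ∈ closure Ω, V x ≤ S := fun x hx => le_csSup hbdd ⟨x, hx, rfl⟩
  set δ := E - S with hδdef
  have hδ : 0 < δ := by simp [hδdef]; linarith
  -- gradient bound
  have hfc : ContinuousOn (fun x => fderiv ℝ V x) W :=
    hVW.continuousOn_fderiv_of_isOpen hWo (by simp)
  obtain ⟨M₀, hM₀⟩ := hK.exists_bound_of_continuousOn (hfc.mono hKW)
  set M := max M₀ 1 with hMdef
  have hM1 : 1 ≤ M := le_max_right _ _
  have hMpos : 0 < M := lt_of_lt_of_le one_pos hM1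
  have hMg : ∀ x ∈ closure Ω, ‖gradient V x‖ ≤ M := by
    intro x hx
    have h1 : ‖gradient V x‖ = ‖fderiv ℝ V x‖ := by
      rw [gradient]
      exact LinearIsometryEquiv.norm_map _ _
    rw [h1]
    exact le_trans (hM₀ x hx) (le_max_left _ _)
  have hd₀ := hbc.d0_pos
  refine ⟨min (δ * d₀ ^ 2 / 2) (δ ^ 3 / M ^ 2), by positivity, ?_⟩
  intro ε hε hεε
  have hε1 : ε ≤ δ * d₀ ^ 2 / 2 := le_trans hεε (min_le_left _ _)
  have hε2 : ε ≤ δ ^ 3 / M ^ 2 := le_trans hεε (min_le_right _ _)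
  have main : ∀ q ∈ Ω, V q + ε * Ufun Ω k q = E →
      gradient V q + ε • gradient (Ufun Ω k) q ≠ 0 := by
    intro q hq hlevel
    have hqcl : q ∈ closure Ω := subset_closure hq
    have hVq : V q ≤ S := hVle q hqcl
    rcases (frontier Ω).eq_empty_or_nonempty with hF | hFne
    · exfalso
      have hU0 : Ufun Ω k q = 0 := by
        simp only [Ufun, hfun, hF, Metric.infDist_empty,
          hbc.k_eq_id 0 le_rfl hd₀.le]
        norm_num
      rw [hU0] at hlevel
      simp at hlevel
      linarith
    · set g := Metric.infDist q (frontier Ω) with hg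
      have hg0' : 0 ≤ g := Metric.infDist_nonneg
      have hkg_mem := hbc.k_mem g hg0'
      have hUeq : Ufun Ω k q = 1 / (k g) ^ 2 := rfl
      have hUq : δ ≤ ε * Ufun Ω k q := by linarith
      have hUpos : 0 < Ufun Ω k q := by
        rcases lt_or_ge 0 (Ufun Ω k q) with h | h
        · exact h
        · nlinarith
      have hkg0 : 0 < k g := by
        by_contra hc
        push_neg at hc
        have : k g = 0 := le_antisymm hc hkg_mem.1
        rw [hUeq, this] at hUpos
        norm_num at hUpos
      have hkg2 : 0 < (k g) ^ 2 := by positivity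
      have hsq : δ * (k g) ^ 2 ≤ ε := by
        rw [hUeq] at hUq
        rw [mul_one_div] at hUq
        calc δ * (k g) ^ 2 ≤ (ε / (k g) ^ 2) * (k g) ^ 2 := by
              apply mul_le_mul_of_nonneg_right hUq hkg2.le
          _ = ε := by field_simp
      have hkgd : k g < d₀ := by
        have h1 : (k g) ^ 2 < d₀ ^ 2 := by nlinarith
        exact lt_of_pow_lt_pow_left₀ 2 hd₀.le h1
      have hkmono : MonotoneOn k (Set.Ici 0) := by
        apply monotoneOn_of_deriv_nonneg (convex_Ici 0)
          hbc.k_smooth.continuous.continuousOn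
        · intro x hx
          exact ((hbc.k_smooth.differentiable (by simp)) x).differentiableWithinAt
        · intro x hx
          rw [interior_Ici] at hx
          exact (hbc.k_deriv_mem x (le_of_lt hx)).1
      have hgd : g < d₀ := by
        by_contra hc
        push_neg at hc
        have h1 : k d₀ ≤ k g := hkmono (Set.mem_Ici.mpr hd₀.le) (Set.mem_Ici.mpr hg0') hc
        rw [hbc.k_eq_id d₀ hd₀.le le_rfl] at h1
        linarith
      have hkg_eq : k g = g := hbc.k_eq_id g hg0' hgd.le
      have hgpos : 0 < g := hkg_eq ▸ hkg0
      obtain ⟨u, hu1, hinner⟩ := inner_grad_Ufun Ω d₀ k hbc q hq hFne hgpos hgd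
      intro h0
      have hinner0 : ⟪gradient V q + ε • gradient (Ufun Ω k) q, u⟫ = 0 := by
        rw [h0, inner_zero_left]
      rw [inner_add_left, real_inner_smul_left, hinner] at hinner0
      have hVinner : -M ≤ ⟪gradient V q, u⟫ := by
        have h1 : |⟪gradient V q, u⟫| ≤ ‖gradient V q‖ * ‖u‖ := abs_real_inner_le_norm _ _
        rw [hu1, mul_one] at h1
        have h2 := hMg q hqcl
        have := neg_abs_le ⟪gradient V q, u⟫
        linarith [abs_le.mp h1]
      -- bound g ≤ δ / M and g ^ 3 ≤ ε / M
      have hg2 : g ^ 2 ≤ ε / δ := by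
        rw [hkg_eq] at hsq
        rw [le_div_iff₀ hδ]
        linarith [hsq]
      have hεδ : ε / δ ≤ δ ^ 2 / M ^ 2 := by
        rw [div_le_div_iff₀ hδ (by positivity)]
        calc ε * M ^ 2 ≤ (δ ^ 3 / M ^ 2) * M ^ 2 := by
              apply mul_le_mul_of_nonneg_right hε2 (by positivity)
          _ = δ ^ 3 := by field_simp
          _ = δ ^ 2 * δ := by ring
      have hgδM : g ≤ δ / M := by
        apply le_of_pow_le_pow_left₀ two_ne_zero (by positivity)
        calc g ^ 2 ≤ ε / δ := hg2
          _ ≤ δ ^ 2 / M ^ 2 := hεδ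
          _ = (δ / M) ^ 2 := by field_simp
      have hg3 : M * g ^ 3 ≤ ε := by
        have h1 : g ^ 3 = g ^ 2 * g := by ring
        calc M * g ^ 3 = M * (g ^ 2 * g) := by rw [h1]
          _ ≤ M * ((ε / δ) * (δ / M)) := by
              apply mul_le_mul_of_nonneg_left _ hMpos.le
              exact mul_le_mul hg2 hgδM hg0' (by positivity)
          _ = ε := by field_simp
      have hg3pos : 0 < g ^ 3 := by positivity
      have hbig : 2 * M ≤ ε * (2 / g ^ 3) := by
        rw [mul_div_assoc', le_div_iff₀ hg3pos]
        linarith [hg3]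
      linarith [hinner0, hVinner, hbig, hM1]
  refine ⟨main, ?_⟩
  intro q hq p hp ⟨hp0, hgr⟩
  apply main q hq _ hgr
  rw [hp0] at hp
  simp at hp
  linarith
end
end
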